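/- The tetrahedron in ℤ³ with vertices (1,0,0), (0,1,0), (-2,2,7), (1,-2,-5) is Fano, and the barycentric coordinate of the origin with respect to these vertices is (3/19, 4/19, 5/19, 7/19). -/

import Mathlib

/-- The real vector corresponding to a lattice point of `ℤ³`. -/
noncomputable def toR (x : Fin 3 → ℤ) : Fin 3 → ℝ := fun i => (x i : ℝ)

/-- A lattice tetrahedron in `ℤ³` is *Fano* if its vertices are affinely independent
lattice points, and the only lattice point it contains other than its vertices is the
origin, which lies strictly in its interior. -/
def IsFanoTetra (x : Fin 4 → Fin 3 → ℤ) : Prop :=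
  AffineIndependent ℝ (fun i => toR (x i)) ∧
  (0 : Fin 3 → ℝ) ∈ interior (convexHull ℝ (Set.range fun i => toR (x i))) ∧
  ∀ p : Fin 3 → ℤ, toR p ∈ convexHull ℝ (Set.range fun i => toR (x i)) →
    p = 0 ∨ ∃ i, p = x i

private lemma fano_aux_ai :
    AffineIndependent ℝ (fun i => toR (![![1, 0, 0], ![0, 1, 0], ![-2, 2, 7], ![1, -2, -5]] i)) := by
  rw [affineIndependent_iff_of_fintype]
  intro w hw hv
  rw [Finset.weightedVSub_eq_linear_combination _ hw] at hv
  have h0 := congrFun hv 0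
  have h1 := congrFun hv 1
  have h2 := congrFun hv 2
  simp [toR, Fin.sum_univ_four] at h0 h1 h2
  rw [Fin.sum_univ_four] at hw
  have e0 : w 0 = 0 := by linarith
  have e1 : w 1 = 0 := by linarith
  have e2 : w 2 = 0 := by linarith
  have e3 : w 3 = 0 := by linarith
  intro i
  fin_cases i <;> [exact e0; exact e1; exact e2; exact e3]

private noncomputable def fanoBasis : AffineBasis (Fin 4) ℝ (Fin 3 → ℝ) := by
  refine ⟨fun i => toR (![![1, 0, 0], ![0, 1, 0], ![-2, 2, 7], ![1, -2, -5]] i), fano_aux_ai, ?_⟩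
  rw [fano_aux_ai.affineSpan_eq_top_iff_card_eq_finrank_add_one]
  simp

private lemma fanoBasis_apply :
    ⇑fanoBasis = fun i => toR (![![1, 0, 0], ![0, 1, 0], ![-2, 2, 7], ![1, -2, -5]] i) := rfl

theorem tetrahedron_3457_isFano :
    IsFanoTetra ![![1, 0, 0], ![0, 1, 0], ![-2, 2, 7], ![1, -2, -5]] ∧
    (∑ i, (![(3 : ℝ) / 19, 4 / 19, 5 / 19, 7 / 19] i) •
        toR (![![1, 0, 0], ![0, 1, 0], ![-2, 2, 7], ![1, -2, -5]] i)) = 0 ∧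
    (∑ i, (![(3 : ℝ) / 19, 4 / 19, 5 / 19, 7 / 19] i)) = 1 := by
  have hμsum : (∑ i, (![(3 : ℝ) / 19, 4 / 19, 5 / 19, 7 / 19] i)) = 1 := by
    rw [Fin.sum_univ_four]; show (3 : ℝ) / 19 + 4 / 19 + 5 / 19 + 7 / 19 = 1; norm_num
  have hμcomb : (∑ i, (![(3 : ℝ) / 19, 4 / 19, 5 / 19, 7 / 19] i) •
      toR (![![1, 0, 0], ![0, 1, 0], ![-2, 2, 7], ![1, -2, -5]] i)) = 0 := by
    funext j
    rw [Fin.sum_univ_four]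
    fin_cases j <;> simp [toR] <;> norm_num
  refine ⟨⟨fano_aux_ai, ?_, ?_⟩, hμcomb, hμsum⟩
  · rw [← fanoBasis_apply, fanoBasis.interior_convexHull]
    have h0 : (0 : Fin 3 → ℝ) =
        Finset.univ.affineCombination ℝ fanoBasis ![(3 : ℝ) / 19, 4 / 19, 5 / 19, 7 / 19] := by
      rw [Finset.affineCombination_eq_linear_combination _ _ _ hμsum, fanoBasis_apply, hμcomb]
    intro i
    rw [h0, fanoBasis.coord_apply_combination_of_mem (Finset.mem_univ i) hμsum]
    fin_cases i <;> norm_num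
  · intro p hp
    rw [← fanoBasis_apply, convexHull_range_eq_exists_affineCombination] at hp
    obtain ⟨s, w, hw0, hw1, hx⟩ := hp
    have hcnn : ∀ i, 0 ≤ fanoBasis.coord i (toR p) := by
      intro i
      rw [← hx]
      by_cases hi : i ∈ s
      · rw [fanoBasis.coord_apply_combination_of_mem hi hw1]; exact hw0 i hi
      · rw [fanoBasis.coord_apply_combination_of_notMem hi hw1]
    have hcsum : ∑ i, fanoBasis.coord i (toR p) = 1 :=
      fanoBasis.sum_coord_apply_eq_one (toR p)
    have hccomb : ∑ i, fanoBasis.coord i (toR p) • fanoBasis i = toR p := by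
      rw [← Finset.affineCombination_eq_linear_combination _ _ _ hcsum]
      exact fanoBasis.affineCombination_coord_eq_self (toR p)
    simp only [fanoBasis_apply] at hccomb
    have h0 := congrFun hccomb 0
    have h1 := congrFun hccomb 1
    have h2 := congrFun hccomb 2
    simp [toR, Fin.sum_univ_four] at h0 h1 h2
    rw [Fin.sum_univ_four] at hcsum
    have n0 := hcnn 0
    have n1 := hcnn 1
    have n2 := hcnn 2
    have n3 := hcnn 3
    have i1 : (0 : ℝ) ≤ 16 * (p 0 : ℝ) - 3 * (p 1 : ℝ) + 5 * (p 2 : ℝ) + 3 := by linarith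
    have i2 : (0 : ℝ) ≤ -4 * (p 0 : ℝ) + 15 * (p 1 : ℝ) - 6 * (p 2 : ℝ) + 4 := by linarith
    have i3 : (0 : ℝ) ≤ -5 * (p 0 : ℝ) - 5 * (p 1 : ℝ) + 2 * (p 2 : ℝ) + 5 := by linarith
    have i4 : (0 : ℝ) ≤ -7 * (p 0 : ℝ) - 7 * (p 1 : ℝ) - (p 2 : ℝ) + 7 := by linarith
    have j1 : (0 : ℤ) ≤ 16 * p 0 - 3 * p 1 + 5 * p 2 + 3 := by exact_mod_cast i1
    have j2 : (0 : ℤ) ≤ -4 * p 0 + 15 * p 1 - 6 * p 2 + 4 := by exact_mod_cast i2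
    have j3 : (0 : ℤ) ≤ -5 * p 0 - 5 * p 1 + 2 * p 2 + 5 := by exact_mod_cast i3
    have j4 : (0 : ℤ) ≤ -7 * p 0 - 7 * p 1 - p 2 + 7 := by exact_mod_cast i4
    have b0l : (-2 : ℝ) ≤ (p 0 : ℝ) := by linarith
    have b0u : (p 0 : ℝ) ≤ 1 := by linarith
    have b1l : (-2 : ℝ) ≤ (p 1 : ℝ) := by linarith
    have b1u : (p 1 : ℝ) ≤ 2 := by linarith
    have b2l : (-5 : ℝ) ≤ (p 2 : ℝ) := by linarith
    have b2u : (p 2 : ℝ) ≤ 7 := by linarith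
    have k0l : (-2 : ℤ) ≤ p 0 := by exact_mod_cast b0l
    have k0u : p 0 ≤ (1 : ℤ) := by exact_mod_cast b0u
    have k1l : (-2 : ℤ) ≤ p 1 := by exact_mod_cast b1l
    have k1u : p 1 ≤ (2 : ℤ) := by exact_mod_cast b1u
    have k2l : (-5 : ℤ) ≤ p 2 := by exact_mod_cast b2l
    have k2u : p 2 ≤ (7 : ℤ) := by exact_mod_cast b2u
    have hcases : (p 0 = 0 ∧ p 1 = 0 ∧ p 2 = 0) ∨ (p 0 = 1 ∧ p 1 = 0 ∧ p 2 = 0) ∨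
        (p 0 = 0 ∧ p 1 = 1 ∧ p 2 = 0) ∨ (p 0 = -2 ∧ p 1 = 2 ∧ p 2 = 7) ∨
        (p 0 = 1 ∧ p 1 = -2 ∧ p 2 = -5) := by
      have hsp0 : p 0 = -2 ∨ p 0 = -1 ∨ p 0 = 0 ∨ p 0 = 1 := by omega
      have hsp1 : p 1 = -2 ∨ p 1 = -1 ∨ p 1 = 0 ∨ p 1 = 1 ∨ p 1 = 2 := by omega
      rcases hsp0 with h | h | h | h <;> rcases hsp1 with h' | h' | h' | h' | h' <;> omega
    rcases hcases with ⟨a, b, d⟩ | ⟨a, b, d⟩ | ⟨a, b, d⟩ | ⟨a, b, d⟩ | ⟨a, b, d⟩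
    · exact Or.inl (funext fun i => by fin_cases i <;> simpa)
    · exact Or.inr ⟨0, funext fun i => by fin_cases i <;> simpa⟩
    · exact Or.inr ⟨1, funext fun i => by fin_cases i <;> simpa⟩
    · exact Or.inr ⟨2, funext fun i => by fin_cases i <;> simpa⟩
    · exact Or.inr ⟨3, funext fun i => by fin_cases i <;> simpa⟩
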